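/- arXiv:0904.0240 — 3 statements merged into one kernel-verified Lean document; each statement's English description precedes it below -/
import Mathlib

section
/- Generalized lifting lemma: let N be a D-module, L_γ, L_β ≤ N submodules, γ̄ : M' → N/L_γ and β̄ : N' → N/L_β morphisms, and set L := L_γ + L_β with quotient maps π_γ : N/L_γ → N/L and π_β : N/L_β → N/L. Assume (im): img(π_γ ∘ γ̄) ≤ img(π_β ∘ β̄), and (eff): the preimage in N of img(γ̄) intersected with L equals L_γ. Then there exists a morphism ᾱ : M' → N'/L_α, where L_α := β̄^{-1}(L/L_β pulled back appropriately), i.e. L_α is the preimage under β̄ of the image of L in N/L_β, such that the induced square commutes: (π_β ∘ β̄ induced on N'/L_α) ∘ ᾱ = π_γ ∘ γ̄. Moreover such ᾱ with combined image equal to β̄^{-1}(image of π_γ∘γ̄) is unique. -/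
/-- The generalized lifting lemma: given generalized morphisms `γ = (γ̄, L_γ) : M' → N`
and `β = (β̄, L_β) : N' → N`, with common coarsening aid `L := L_γ + L_β`, satisfying
(im) `Img γ̃ ≤ Img β̃` and (eff) `Img γ ∩ L = L_γ`, there is a lift
`ᾱ : M' → N'/L_α` with `L_α := β̄⁻¹(image of L in N/L_β)` making the square commute,
and the lift with combined image `β̄⁻¹(Img(π_γ∘γ̄))` is unique. -/
theorem generalized_lifting_lemma
    (D : Type*) [Ring D] (M' N' N : Type*)
    [AddCommGroup M'] [Module D M'] [AddCommGroup N'] [Module D N']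
    [AddCommGroup N] [Module D N]
    (Lγ Lβ : Submodule D N)
    (γbar : M' →ₗ[D] N ⧸ Lγ) (βbar : N' →ₗ[D] N ⧸ Lβ) :
    -- the common coarsening aid and the two projections
    let L : Submodule D N := Lγ ⊔ Lβ
    let πγ : (N ⧸ Lγ) →ₗ[D] N ⧸ L :=
      Submodule.mapQ Lγ L LinearMap.id (by intro x hx; exact Submodule.mem_sup_left hx)
    let πβ : (N ⧸ Lβ) →ₗ[D] N ⧸ L :=
      Submodule.mapQ Lβ L LinearMap.id (by intro x hx; exact Submodule.mem_sup_right hx)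
    -- the aid of the lift
    let Lα : Submodule D N' := Submodule.comap βbar (Submodule.map Lβ.mkQ L)
    -- (im): the combined image of the coarsened β contains that of the coarsened γ
    LinearMap.range (πγ ∘ₗ γbar) ≤ LinearMap.range (πβ ∘ₗ βbar) →
    -- (eff): the coarsening of γ is effective
    Submodule.comap Lγ.mkQ (LinearMap.range γbar) ⊓ L = Lγ →
    -- the induced map `N'/L_α → N/L` exists and the lift exists uniquely
    ∃ βhat : (N' ⧸ Lα) →ₗ[D] N ⧸ L,
      βhat ∘ₗ Lα.mkQ = πβ ∘ₗ βbar ∧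
      ∃! αbar : M' →ₗ[D] N' ⧸ Lα,
        βhat ∘ₗ αbar = πγ ∘ₗ γbar ∧
        Submodule.comap Lα.mkQ (LinearMap.range αbar) =
          Submodule.comap βbar
            (Submodule.comap πβ (LinearMap.range (πγ ∘ₗ γbar))) := by

  intro L πγ πβ Lα him _heff
  -- Lα is the kernel of πβ ∘ βbar
  have hmap : Submodule.map Lβ.mkQ L = LinearMap.ker πβ := by
    ext y
    obtain ⟨n, rfl⟩ := Lβ.mkQ_surjective y
    simp only [Submodule.mem_map, LinearMap.mem_ker, Submodule.mkQ_apply,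
      Submodule.mapQ_apply, LinearMap.id_coe, id_eq, Submodule.Quotient.mk_eq_zero]
    have hiff : πβ (Submodule.Quotient.mk n) = 0 ↔ n ∈ L := by
      show πβ (Lβ.mkQ n) = 0 ↔ n ∈ L
      rw [Submodule.mkQ_apply, Submodule.mapQ_apply]
      simp
    rw [hiff]
    constructor
    · rintro ⟨m, hm, hmn⟩
      have hsub : m - n ∈ Lβ := (Submodule.Quotient.eq _).mp hmn
      have hn : n = m - (m - n) := (sub_sub_cancel m n).symm
      rw [hn]
      exact Submodule.sub_mem _ hm (Submodule.mem_sup_right hsub)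
    · intro hn; exact ⟨n, hn, rfl⟩
  have hker : Lα = LinearMap.ker (πβ ∘ₗ βbar) := by
    show Submodule.comap βbar (Submodule.map Lβ.mkQ L) = _
    rw [hmap, LinearMap.ker_comp]
  refine ⟨Submodule.liftQ Lα (πβ ∘ₗ βbar) hker.le, Submodule.liftQ_mkQ _ _ _, ?_⟩
  set βhat := Submodule.liftQ Lα (πβ ∘ₗ βbar) hker.le with hβhat
  have hcomm : βhat ∘ₗ Lα.mkQ = πβ ∘ₗ βbar := Submodule.liftQ_mkQ _ _ _
  have hkb : LinearMap.ker βhat = ⊥ := Submodule.ker_liftQ_eq_bot _ _ _ hker.ge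
  have hinj : Function.Injective βhat := LinearMap.ker_eq_bot.mp hkb
  have hrange : ∀ m : M', πγ (γbar m) ∈ LinearMap.range βhat := by
    intro m
    rw [hβhat, Submodule.range_liftQ]
    exact him ⟨m, rfl⟩
  set e := LinearEquiv.ofInjective βhat hinj with he
  set αbar : M' →ₗ[D] N' ⧸ Lα :=
    (e.symm : LinearMap.range βhat →ₗ[D] N' ⧸ Lα) ∘ₗ
      LinearMap.codRestrict (LinearMap.range βhat) (πγ ∘ₗ γbar) hrange with hα
  have hβe : ∀ y : LinearMap.range βhat, βhat (e.symm y) = (y : N ⧸ L) := by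
    intro y
    have h1 : e (e.symm y) = y := e.apply_symm_apply y
    have h2 : (e (e.symm y) : N ⧸ L) = βhat (e.symm y) := rfl
    rw [← h2, h1]
  have hαcomm : βhat ∘ₗ αbar = πγ ∘ₗ γbar := by
    ext m
    simp only [hα, LinearMap.comp_apply, LinearEquiv.coe_coe]
    rw [hβe]
    rfl
  refine ⟨αbar, ⟨hαcomm, ?_⟩, ?_⟩
  · have h1 : Submodule.comap βbar (Submodule.comap πβ (LinearMap.range (πγ ∘ₗ γbar)))
        = Submodule.comap (πβ ∘ₗ βbar) (LinearMap.range (πγ ∘ₗ γbar)) := by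
      rw [Submodule.comap_comp]
    have h2 : Submodule.comap βhat (LinearMap.range (πγ ∘ₗ γbar)) = LinearMap.range αbar := by
      have h3 : LinearMap.range (πγ ∘ₗ γbar) = Submodule.map βhat (LinearMap.range αbar) := by
        rw [← LinearMap.range_comp, hαcomm]
      rw [h3, Submodule.comap_map_eq, hkb, sup_bot_eq]
    rw [h1, ← hcomm, Submodule.comap_comp, h2]
  · rintro α' ⟨hc, -⟩
    ext m
    exact hinj (LinearMap.congr_fun (hc.trans hαcomm.symm) m)
end

section
/- Let C be a chain complex of D-modules with a finite ascending filtration (F_pC) respected by the differential ∂. In each fixed degree, with A^∞_p := ker ∂ ∩ F_pC and L := ∂C + F_{p-1}C, one has (∂C + F_{p-1}C) ∩ (A^∞_p + F_{p-1}C) = (∂C ∩ F_pC) + F_{p-1}C. -/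
/-- The key modular-law computation in the convergence theorem: with
`A^∞_p = ker ∂ ∩ F_pC`, one has
`(∂C + F_{p-1}C) ∩ (A^∞_p + F_{p-1}C) = (∂C ∩ F_pC) + F_{p-1}C`
(fixed degree `n`; `C1`, `C0`, `Cm1` are the components in degrees `n+1`, `n`, `n-1`,
and `∂C = range(d1)` is the image of the differential landing in degree `n`). -/
theorem filtered_complex_effectiveness
    (D : Type*) [Ring D]
    (C1 C0 Cm1 : Type*) [AddCommGroup C1] [Module D C1]
    [AddCommGroup C0] [Module D C0] [AddCommGroup Cm1] [Module D Cm1]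
    (d1 : C1 →ₗ[D] C0) (d0 : C0 →ₗ[D] Cm1)
    (hdd : d0 ∘ₗ d1 = 0)
    (F1 : ℤ → Submodule D C1) (F0 : ℤ → Submodule D C0) (Fm1 : ℤ → Submodule D Cm1)
    (hF1 : Monotone F1) (hF0 : Monotone F0) (hFm1 : Monotone Fm1)
    (hd1 : ∀ p, (F1 p).map d1 ≤ F0 p) (hd0 : ∀ p, (F0 p).map d0 ≤ Fm1 p)
    (p : ℤ) :
    (LinearMap.range d1 ⊔ F0 (p - 1)) ⊓ ((LinearMap.ker d0 ⊓ F0 p) ⊔ F0 (p - 1)) =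
      (LinearMap.range d1 ⊓ F0 p) ⊔ F0 (p - 1) := by
  have hFle : F0 (p - 1) ≤ F0 p := hF0 (by omega)
  apply le_antisymm
  · rintro x ⟨hx1, hx2⟩
    rw [SetLike.mem_coe, Submodule.mem_sup] at hx1 hx2
    obtain ⟨r, hr, f, hf, rfl⟩ := hx1
    obtain ⟨a, ⟨-, haF⟩, f', hf', heq⟩ := hx2
    have hrF : r ∈ F0 p := by
      have : r = a + f' - f := by
        have := heq; linear_combination (norm := abel) -this
      rw [this]
      exact sub_mem (add_mem haF (hFle hf')) (hFle hf)
    exact Submodule.add_mem_sup ⟨hr, hrF⟩ hf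
  · apply sup_le
    · refine le_inf (le_trans inf_le_left le_sup_left) ?_
      rintro x ⟨⟨y, rfl⟩, hxF⟩
      refine le_sup_left (α := Submodule D C0) ⟨?_, hxF⟩
      have : d0 (d1 y) = 0 := by
        have := congrArg (fun g => g y) hdd
        simpa using this
      exact this
    · exact le_inf le_sup_right le_sup_right
end

section
/- Let D be a ring and M a nonzero finitely generated left D-module admitting a finite projective resolution by finitely generated projectives. Then there exists c ≥ 0 with Ext^c_D(M, D) ≠ 0. -/
open CategoryTheory

open Function

section Alg

variable {R : Type} [Ring R]

/-- The dual of a linear map, as an `Rᵐᵒᵖ`-linear map between duals. -/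
def dualRMap {M N : Type} [AddCommGroup M] [AddCommGroup N] [Module R M] [Module R N]
    (g : M →ₗ[R] N) : (N →ₗ[R] R) →ₗ[Rᵐᵒᵖ] (M →ₗ[R] R) where
  toFun f := f.comp g
  map_add' f₁ f₂ := by ext x; rfl
  map_smul' a f := by ext x; rfl

@[simp] lemma dualRMap_apply {M N : Type} [AddCommGroup M] [AddCommGroup N] [Module R M]
    [Module R N] (g : M →ₗ[R] N) (f : N →ₗ[R] R) (x : M) : dualRMap g f x = f (g x) := rfl

lemma pi_dual_sum {n : ℕ} (h : (Fin n → R) →ₗ[R] R) (v : Fin n → R) :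
    h v = ∑ i, v i * h (Pi.single i 1) := by
  have hv : v = ∑ i, v i • (Pi.single i 1 : Fin n → R) := by
    funext j
    rw [Finset.sum_apply]
    simp [Pi.single_apply, Finset.sum_ite_eq]
  conv_lhs => rw [hv]
  rw [map_sum]
  simp [smul_eq_mul]

theorem eval_injective {M : Type} [AddCommGroup M] [Module R M] [Module.Finite R M]
    [Module.Projective R M] (x : M) (hx : ∀ f : M →ₗ[R] R, f x = 0) : x = 0 := by
  obtain ⟨n, π, s, -, -, hπs⟩ := Module.Finite.exists_comp_eq_id_of_projective R M
  have h1 : s x = 0 := by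
    funext i
    exact hx ((LinearMap.proj i).comp s)
  have := congrArg (fun g => g x) hπs
  simp only [LinearMap.comp_apply, LinearMap.id_apply] at this
  rw [← this, h1, map_zero]

theorem eval_surjective {M : Type} [AddCommGroup M] [Module R M] [Module.Finite R M]
    [Module.Projective R M] (φ : (M →ₗ[R] R) →ₗ[Rᵐᵒᵖ] R) :
    ∃ y : M, ∀ f : M →ₗ[R] R, φ f = f y := by
  obtain ⟨n, π, s, -, -, hπs⟩ := Module.Finite.exists_comp_eq_id_of_projective R M
  have hid : ∀ x : M, π (s x) = x := fun x => congrArg (fun g => g x) hπs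
  set g : Fin n → (M →ₗ[R] R) := fun i => (LinearMap.proj i).comp s with hg
  refine ⟨∑ i, φ (g i) • π (Pi.single i 1), fun f => ?_⟩
  have hf : f = ∑ i, MulOpposite.op (f (π (Pi.single i 1))) • g i := by
    ext x
    rw [LinearMap.sum_apply]
    have : f x = (f.comp π) (s x) := by rw [LinearMap.comp_apply, hid]
    rw [this, pi_dual_sum (f.comp π) (s x)]
    refine Finset.sum_congr rfl fun i _ => ?_
    simp [g, MulOpposite.smul_eq_mul_unop]
  conv_lhs => rw [hf]
  rw [map_sum, map_sum]
  refine Finset.sum_congr rfl fun i _ => ?_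
  rw [map_smul, map_smul, MulOpposite.smul_eq_mul_unop, MulOpposite.unop_op, smul_eq_mul]

/-- The dual of a finitely generated projective module is projective over `Rᵐᵒᵖ`. -/
theorem dual_projective {M : Type} [AddCommGroup M] [Module R M] [Module.Finite R M]
    [Module.Projective R M] : Module.Projective Rᵐᵒᵖ (M →ₗ[R] R) := by
  obtain ⟨n, π, s, -, -, hπs⟩ := Module.Finite.exists_comp_eq_id_of_projective R M
  have hid : ∀ x : M, π (s x) = x := fun x => congrArg (fun g => g x) hπs
  set g : Fin n → (M →ₗ[R] R) := fun i => (LinearMap.proj i).comp s with hg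
  let i : (M →ₗ[R] R) →ₗ[Rᵐᵒᵖ] (Fin n → Rᵐᵒᵖ) :=
    { toFun := fun f j => MulOpposite.op (f (π (Pi.single j 1)))
      map_add' := fun f₁ f₂ => by funext j; simp
      map_smul' := fun a f => by
        funext j
        simp [MulOpposite.smul_eq_mul_unop, MulOpposite.op_mul] }
  let t : (Fin n → Rᵐᵒᵖ) →ₗ[Rᵐᵒᵖ] (M →ₗ[R] R) :=
    { toFun := fun w => ∑ j, w j • g j
      map_add' := fun w₁ w₂ => by
        simp only [Pi.add_apply, add_smul, Finset.sum_add_distrib]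
      map_smul' := fun a w => by
        simp only [Pi.smul_apply, smul_eq_mul, mul_smul, RingHom.id_apply, Finset.smul_sum] }
  refine Module.Projective.of_split i t ?_
  ext f x
  simp only [LinearMap.comp_apply, LinearMap.id_apply, LinearMap.coe_mk, AddHom.coe_mk, t, i]
  rw [LinearMap.sum_apply]
  have : f x = (f.comp π) (s x) := by rw [LinearMap.comp_apply, hid]
  rw [this, pi_dual_sum (f.comp π) (s x)]
  refine Finset.sum_congr rfl fun j _ => ?_
  simp [g, MulOpposite.smul_eq_mul_unop]

end Alg

section Split

variable {A : Type} [Ring A]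

/-- A bounded exact complex of projectives admits a retraction at the bottom. -/
theorem exists_retraction_of_exact_complex (n : ℕ) (Q : ℕ → Type)
    [∀ i, AddCommGroup (Q i)] [∀ i, Module A (Q i)]
    (hproj : ∀ i, Module.Projective A (Q i))
    (δ : ∀ i, Q i →ₗ[A] Q (i + 1))
    (hcomp : ∀ i x, δ (i + 1) (δ i x) = 0)
    (hex : ∀ i x, δ (i + 1) x = 0 → ∃ y, δ i y = x)
    (hinj : ∀ x, δ 0 x = 0 → x = 0)
    (htriv : ∀ i, n < i → Subsingleton (Q i)) :
    ∃ r : Q 1 →ₗ[A] Q 0, ∀ x, r (δ 0 x) = x := by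
  -- projector onto the kernel of δ i
  have key : ∀ m i, n + 1 ≤ i + m →
      ∃ p : Q i →ₗ[A] Q i, (∀ x, δ i (p x) = 0) ∧ (∀ x, δ i x = 0 → p x = x) := by
    intro m
    induction m with
    | zero =>
      intro i hi
      have : Subsingleton (Q i) := htriv i (by omega)
      exact ⟨LinearMap.id, fun x => by rw [Subsingleton.elim x 0]; simp,
        fun x _ => rfl⟩
    | succ m ih =>
      intro i hi
      obtain ⟨p', h1', h2'⟩ := ih (i + 1) (by omega)
      set K := LinearMap.ker (δ (i + 1)) with hK
      -- K is projective
      have hρι : ∀ z : K, (LinearMap.codRestrict K p' (fun x =>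
          LinearMap.mem_ker.mpr (h1' x))) (K.subtype z) = z := by
        rintro ⟨z, hz⟩
        ext
        simpa using h2' z hz
      haveI : Module.Projective A K := by
        haveI := hproj (i + 1)
        exact Module.Projective.of_split K.subtype
          (LinearMap.codRestrict K p' (fun x => LinearMap.mem_ker.mpr (h1' x)))
          (by ext z; exact congrArg Subtype.val (hρι z))
      -- corestriction of δ i to K is surjective
      set c : Q i →ₗ[A] K := LinearMap.codRestrict K (δ i)
        (fun x => LinearMap.mem_ker.mpr (hcomp i x)) with hc
      have hcsurj : Surjective c := by
        rintro ⟨x, hx⟩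
        obtain ⟨y, hy⟩ := hex i x (LinearMap.mem_ker.mp hx)
        exact ⟨y, by ext; exact hy⟩
      haveI := hproj i
      obtain ⟨s, hs⟩ := Module.projective_lifting_property c LinearMap.id hcsurj
      have hs' : ∀ z : K, c (s z) = z := fun z => congrArg (fun g => g z) hs
      refine ⟨LinearMap.id - s ∘ₗ c, fun x => ?_, fun x hx => ?_⟩
      · have h1 : δ i (s (c x)) = δ i x := congrArg Subtype.val (hs' (c x))
        simp only [LinearMap.sub_apply, LinearMap.id_apply, LinearMap.comp_apply, map_sub, h1,
          sub_self]
      · have hcx : c x = 0 := by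
          have h4 : (c x : Q (i + 1)) = 0 := by
            rw [LinearMap.codRestrict_apply]; exact hx
          exact Subtype.ext h4
        simp [hcx]
  obtain ⟨p, h1, h2⟩ := key n 1 (by omega)
  have hinj' : Injective (δ 0) := by
    intro x y hxy
    have h0 : δ 0 (x - y) = 0 := by rw [map_sub, hxy, sub_self]
    exact sub_eq_zero.mp (hinj _ h0)
  set e := LinearEquiv.ofInjective (δ 0) hinj' with he
  have hmem : ∀ x : Q 1, p x ∈ LinearMap.range (δ 0) := by
    intro x
    obtain ⟨y, hy⟩ := hex 0 (p x) (h1 x)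
    exact ⟨y, hy⟩
  set c' : Q 1 →ₗ[A] LinearMap.range (δ 0) := LinearMap.codRestrict _ p hmem with hc'
  refine ⟨e.symm.toLinearMap ∘ₗ c', fun x => ?_⟩
  have h3 : c' (δ 0 x) = e x := by
    ext
    rw [LinearMap.codRestrict_apply, h2 _ (hcomp 0 x)]
    rfl
  simp only [LinearMap.comp_apply, LinearEquiv.coe_coe, h3, LinearEquiv.symm_apply_apply]

end Split

section Main

variable {R : Type} [Ring R]

theorem dual_exact_surj (n : ℕ) (P : ℕ → Type)
    [∀ i, AddCommGroup (P i)] [∀ i, Module R (P i)]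
    (hfin : ∀ i, Module.Finite R (P i)) (hproj : ∀ i, Module.Projective R (P i))
    (d : ∀ i, P (i + 1) →ₗ[R] P i)
    (hdd : ∀ i x, d i (d (i + 1) x) = 0)
    (hex : ∀ i (g : P (i + 1) →ₗ[R] R), g.comp (d (i + 1)) = 0 →
      ∃ f : P i →ₗ[R] R, f.comp (d i) = g)
    (hinj : ∀ f : P 0 →ₗ[R] R, f.comp (d 0) = 0 → f = 0)
    (htriv : ∀ i, n < i → Subsingleton (P i)) :
    Function.Surjective (d 0) := by
  haveI := hfin; haveI := hproj
  have hQproj : ∀ i, Module.Projective Rᵐᵒᵖ (P i →ₗ[R] R) := fun i => dual_projective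
  have hQtriv : ∀ i, n < i → Subsingleton (P i →ₗ[R] R) := by
    intro i hi
    haveI := htriv i hi
    refine ⟨fun f g => ?_⟩
    ext x
    rw [Subsingleton.elim x 0, map_zero, map_zero]
  obtain ⟨r, hr⟩ := exists_retraction_of_exact_complex n (fun i => P i →ₗ[R] R) hQproj
    (fun i => dualRMap (d i))
    (fun i f => by ext x; simpa using congrArg (fun y => f y) (hdd i x))
    (fun i g hg => hex i g hg) (fun f hf => hinj f hf) hQtriv
  intro x
  -- evaluation at x, as an `Rᵐᵒᵖ`-linear functional on the dual
  let evx : (P 0 →ₗ[R] R) →ₗ[Rᵐᵒᵖ] R :=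
    { toFun := fun f => f x
      map_add' := fun f g => rfl
      map_smul' := fun a f => rfl }
  obtain ⟨y, hy⟩ := eval_surjective (M := P 1) (evx ∘ₗ r)
  refine ⟨y, ?_⟩
  have : ∀ f : P 0 →ₗ[R] R, f (d 0 y - x) = 0 := by
    intro f
    have h1 : (evx ∘ₗ r) (dualRMap (d 0) f) = f x := by
      simp only [LinearMap.comp_apply, hr f]
      rfl
    have h2 : (evx ∘ₗ r) (dualRMap (d 0) f) = f (d 0 y) := by
      rw [hy (dualRMap (d 0) f)]
      rfl
    rw [map_sub, ← h1, h2, sub_self]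
  exact sub_eq_zero.mp (eval_injective (M := P 0) _ this)

end Main


/-- If `M` is a nonzero finitely generated left `D`-module admitting a finite projective
resolution by finitely generated projectives, then `Ext^c_D(M, D) ≠ 0` for some `c ≥ 0`. -/
theorem exists_ext_ne_zero
    (D : Type) [Ring D] (M : Type) [AddCommGroup M] [Module D M]
    [Module.Finite D M] (hM : Nontrivial M)
    (hres : ∃ (n : ℕ) (P : ProjectiveResolution (ModuleCat.of D M)),
      (∀ i : ℕ, Module.Finite D (P.complex.X i)) ∧
      ∀ i : ℕ, n < i → Subsingleton (P.complex.X i)) :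
    ∃ c : ℕ,
      Nontrivial
        (((Ext ℤ (ModuleCat D) c).obj (Opposite.op (ModuleCat.of D M))).obj
          (ModuleCat.of D D)) := by
  by_contra hc
  push_neg at hc
  obtain ⟨n, P, hfin, htriv⟩ := hres
  set Y : ModuleCat D := ModuleCat.of D D with hY
  set K := P.complex.linearYonedaObj ℤ Y with hKdef
  have hK : ∀ c : ℕ, K.ExactAt c := by
    intro c
    rw [HomologicalComplex.exactAt_iff_isZero_homology]
    haveI : Subsingleton (((Ext ℤ (ModuleCat D) c).obj (Opposite.op (ModuleCat.of D M))).obj Y) :=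
      hc c
    exact (ModuleCat.isZero_of_subsingleton _).of_iso (P.isoExt c Y).symm
  -- the exactness conditions, concretely
  have hex : ∀ i (g : (P.complex.X (i+1) ⟶ Y)), (P.complex.d (i+2) (i+1) ≫ g) = 0 →
      ∃ f : (P.complex.X i ⟶ Y), P.complex.d (i+1) i ≫ f = g := by
    intro i g hg
    have h := (HomologicalComplex.exactAt_iff' K i (i+1) (i+2)
      (by simp) (by simp)).mp (hK (i+1))
    rw [ShortComplex.moduleCat_exact_iff] at h
    have hKd1 : ∀ (f : P.complex.X i ⟶ Y), K.d i (i+1) f = P.complex.d (i+1) i ≫ f := by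
      intro f
      show (P.complex.linearYonedaObj ℤ Y).d i (i+1) f = P.complex.d (i+1) i ≫ f
      simp
      rfl
    have hKd2 : ∀ (f : P.complex.X (i+1) ⟶ Y), K.d (i+1) (i+2) f = P.complex.d (i+2) (i+1) ≫ f := by
      intro f
      show (P.complex.linearYonedaObj ℤ Y).d (i+1) (i+2) f = P.complex.d (i+2) (i+1) ≫ f
      simp
      rfl
    have hscg : ∀ x, (HomologicalComplex.sc' K i (i+1) (i+2)).g x = K.d (i+1) (i+2) x :=
      fun _ => rfl
    have hscf : ∀ x, (HomologicalComplex.sc' K i (i+1) (i+2)).f x = K.d i (i+1) x :=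
      fun _ => rfl
    obtain ⟨f, hf⟩ := h g ((hscg g).trans ((hKd2 g).trans hg))
    exact ⟨f, (hKd1 f).symm.trans ((hscf f).symm.trans hf)⟩
  have hinj : ∀ (f : (P.complex.X 0 ⟶ Y)), (P.complex.d 1 0 ≫ f) = 0 → f = 0 := by
    intro f hf
    have h := (HomologicalComplex.exactAt_iff' K 0 0 1
      (by simp) (by simp)).mp (hK 0)
    rw [ShortComplex.moduleCat_exact_iff] at h
    have hKd1 : ∀ (g : P.complex.X 0 ⟶ Y), K.d 0 1 g = P.complex.d 1 0 ≫ g := by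
      intro g
      show (P.complex.linearYonedaObj ℤ Y).d 0 1 g = P.complex.d 1 0 ≫ g
      simp
      rfl
    have hscg : ∀ x, (HomologicalComplex.sc' K 0 0 1).g x = K.d 0 1 x := fun _ => rfl
    have hscf : ∀ x, (HomologicalComplex.sc' K 0 0 1).f x = K.d 0 0 x := fun _ => rfl
    obtain ⟨g, hg⟩ := h f ((hscg f).trans ((hKd1 f).trans hf))
    rw [hscf, K.shape 0 0 (by simp)] at hg
    rw [← hg]
    rfl
  -- transfer to pure module theory
  haveI hprojmod : ∀ i, Module.Projective D (P.complex.X i) := fun i => by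
    rw [IsProjective.iff_projective]
    exact P.projective i
  have hdd : ∀ i (x : P.complex.X (i+2)),
      (P.complex.d (i+1) i) ((P.complex.d (i+2) (i+1)) x) = 0 := by
    intro i x
    have h := P.complex.d_comp_d (i+2) (i+1) i
    calc (P.complex.d (i+1) i) ((P.complex.d (i+2) (i+1)) x)
        = (P.complex.d (i+2) (i+1) ≫ P.complex.d (i+1) i) x := rfl
      _ = (0 : P.complex.X (i+2) ⟶ P.complex.X i) x := by rw [h]
      _ = 0 := rfl
  have hsurj : Function.Surjective (P.complex.d 1 0) := by
    refine dual_exact_surj (R := D) n (fun i => ↥(P.complex.X i)) (fun i => hfin i)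
      (fun i => hprojmod i) (fun i => (P.complex.d (i+1) i).hom) hdd ?_ ?_ htriv
    · intro i g hg
      obtain ⟨f, hf⟩ := hex i (ModuleCat.ofHom g) (by ext x; exact LinearMap.congr_fun hg x)
      exact ⟨f.hom, by ext x; exact congrArg (fun φ => φ.hom x) hf⟩
    · intro f hf
      have := hinj (ModuleCat.ofHom f) (by ext x; exact LinearMap.congr_fun hf x)
      simpa using congrArg ModuleCat.Hom.hom this
  -- contradiction with `M` nontrivial
  have hπsurj : Function.Surjective (P.π.f 0) :=
    (ModuleCat.epi_iff_surjective (P.π.f 0)).mp inferInstance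
  have hexact := P.exact₀
  rw [ShortComplex.moduleCat_exact_iff_range_eq_ker] at hexact
  have hzero : ∀ x : ↥(P.complex.X 0), P.π.f 0 x = 0 := by
    intro x
    obtain ⟨y, hy⟩ := hsurj x
    have : x ∈ LinearMap.ker (P.π.f 0).hom := by
      rw [← hexact]
      exact ⟨y, hy⟩
    exact this
  haveI hsub : Subsingleton M := by
    refine ⟨fun a b => ?_⟩
    obtain ⟨x, hx⟩ := hπsurj a
    obtain ⟨y, hy⟩ := hπsurj b
    rw [← hx, ← hy, hzero, hzero]
  exact absurd hM (not_nontrivial M)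
end
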